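/- For h ∈ (0, 1/4), set x = √(1−4h). The function d expressed in x, namely x ↦ ((1−x²)/(4x(3−2x²))) · log((1+x)/(1−x)), is strictly decreasing on (0,1). Equivalently, for all 0 < x < 1: (2x⁴ − 3x² + 3)·x·log((1+x)/(1−x)) ≥ 2x²(3 − 2x²). -/

import Mathlib

noncomputable def Lg (x : ℝ) : ℝ := Real.log (1+x) - Real.log (1-x)

lemma hasDerivAt_Lg {x : ℝ} (h1 : -1 < x) (h2 : x < 1) :
    HasDerivAt Lg (2/(1-x^2)) x := by
  have h3 : (1:ℝ)+x ≠ 0 := by linarith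
  have h4 : (1:ℝ)-x ≠ 0 := by linarith
  have h5 : (1:ℝ)-x^2 ≠ 0 := by nlinarith
  have d1 : HasDerivAt (fun x : ℝ => Real.log (1+x)) (1/(1+x)) x := by
    have := (((hasDerivAt_id x).const_add 1).log (by simpa using h3))
    simpa using this
  have d2 : HasDerivAt (fun x : ℝ => Real.log (1-x)) (-1/(1-x)) x := by
    have := (((hasDerivAt_const x (1:ℝ)).sub (hasDerivAt_id x)).log (by simpa using h4))
    simpa using this
  have := d1.sub d2
  refine this.congr_deriv ?_
  field_simp
  ring

noncomputable def hf (x : ℝ) : ℝ := (4*x^2-3)*Lg x + (6*x-4*x^3)/(1-x^2)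

lemma hasDerivAt_hf {x : ℝ} (h1 : -1 < x) (h2 : x < 1) :
    HasDerivAt hf (8*x*Lg x + 4*x^2*(2-x^2)/(1-x^2)^2) x := by
  have h3 : (1:ℝ)+x ≠ 0 := by linarith
  have h4 : (1:ℝ)-x ≠ 0 := by linarith
  have h5 : (1:ℝ)-x^2 ≠ 0 := by nlinarith
  have p1 : HasDerivAt (fun x : ℝ => 4*x^2-3) (8*x) x := by
    have := ((hasDerivAt_pow 2 x).const_mul 4).sub_const 3
    refine this.congr_deriv ?_; ring
  have p2 : HasDerivAt (fun x : ℝ => 6*x-4*x^3) (6-12*x^2) x := by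
    have := ((hasDerivAt_id x).const_mul 6).sub ((hasDerivAt_pow 3 x).const_mul 4)
    refine this.congr_deriv ?_; ring
  have p3 : HasDerivAt (fun x : ℝ => 1-x^2) (-(2*x)) x := by
    have := (hasDerivAt_const x (1:ℝ)).sub (hasDerivAt_pow 2 x)
    refine this.congr_deriv ?_; ring
  have q := (p2.div p3 h5)
  have := (p1.mul (hasDerivAt_Lg h1 h2)).add q
  refine this.congr_deriv ?_
  set L := Lg x
  field_simp
  ring

lemma Lg_pos {x : ℝ} (h0 : 0 < x) (h2 : x < 1) : 0 < Lg x := by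
  have := Real.log_pos (by linarith : (1:ℝ) < 1 + x)
  have := Real.log_neg (by linarith) (by linarith : (1:ℝ) - x < 1)
  unfold Lg; linarith

lemma hf_pos {x : ℝ} (h0 : 0 < x) (h2 : x < 1) : 0 < hf x := by
  have mono : StrictMonoOn hf (Set.Ico 0 1) := by
    apply strictMonoOn_of_deriv_pos (convex_Ico 0 1)
    · intro y hy
      exact (hasDerivAt_hf (by linarith [hy.1]) hy.2).continuousAt.continuousWithinAt
    · intro y hy
      rw [interior_Ico] at hy
      obtain ⟨hy1, hy2⟩ := hy
      rw [(hasDerivAt_hf (by linarith) hy2).deriv]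
      have l := Lg_pos hy1 hy2
      have hys : y^2 < 1 := by
        nlinarith [mul_pos (show (0:ℝ)<1-y by linarith) (show (0:ℝ)<1+y by linarith)]
      have t1 : 0 < 4*y^2*(2-y^2)/(1-y^2)^2 := by
        apply div_pos
        · have := pow_pos hy1 2; nlinarith
        · have : (0:ℝ) < 1 - y^2 := by linarith
          positivity
      have t2 : 0 < 8*y*Lg y := by positivity
      linarith
  have h00 : hf 0 = 0 := by simp [hf, Lg]
  have := mono (Set.left_mem_Ico.2 one_pos) ⟨h0.le, h2⟩ h0
  rwa [h00] at this

noncomputable def gf (x : ℝ) : ℝ := (2*x^4-3*x^2+3)*Lg x - (6*x-4*x^3)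

lemma hasDerivAt_gf {x : ℝ} (h1 : -1 < x) (h2 : x < 1) :
    HasDerivAt gf (2*x*hf x) x := by
  have h5 : (1:ℝ)-x^2 ≠ 0 := by nlinarith
  have p1 : HasDerivAt (fun x : ℝ => 2*x^4-3*x^2+3) (8*x^3-6*x) x := by
    have := (((hasDerivAt_pow 4 x).const_mul 2).sub ((hasDerivAt_pow 2 x).const_mul 3)).add_const 3
    refine this.congr_deriv ?_; ring
  have p2 : HasDerivAt (fun x : ℝ => 6*x-4*x^3) (6-12*x^2) x := by
    have := ((hasDerivAt_id x).const_mul 6).sub ((hasDerivAt_pow 3 x).const_mul 4)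
    refine this.congr_deriv ?_; ring
  have := (p1.mul (hasDerivAt_Lg h1 h2)).sub p2
  refine this.congr_deriv ?_
  unfold hf
  set L := Lg x
  field_simp
  ring

lemma gf_pos {x : ℝ} (h0 : 0 < x) (h2 : x < 1) : 0 < gf x := by
  have mono : StrictMonoOn gf (Set.Ico 0 1) := by
    apply strictMonoOn_of_deriv_pos (convex_Ico 0 1)
    · intro y hy
      exact (hasDerivAt_gf (by linarith [hy.1]) hy.2).continuousAt.continuousWithinAt
    · intro y hy
      rw [interior_Ico] at hy
      obtain ⟨hy1, hy2⟩ := hy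
      rw [(hasDerivAt_gf (by linarith) hy2).deriv]
      have t1 := hf_pos hy1 hy2
      positivity
  have h00 : gf 0 = 0 := by simp [gf, Lg]
  have := mono (Set.left_mem_Ico.2 one_pos) ⟨h0.le, h2⟩ h0
  rwa [h00] at this

noncomputable def Ff (x : ℝ) : ℝ := (1 - x ^ 2) / (4 * x * (3 - 2 * x ^ 2)) * Lg x

lemma hasDerivAt_Ff {x : ℝ} (h0 : 0 < x) (h2 : x < 1) :
    HasDerivAt Ff (-(gf x)/(4*x^2*(3-2*x^2)^2)) x := by
  have hx : x ≠ 0 := ne_of_gt h0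
  have hys : x^2 < 1 := by
    nlinarith [mul_pos (show (0:ℝ)<1-x by linarith) (show (0:ℝ)<1+x by linarith)]
  have h5 : (1:ℝ)-x^2 ≠ 0 := by linarith
  have h6 : (3:ℝ)-2*x^2 ≠ 0 := by nlinarith
  have h7 : 4*x*(3-2*x^2) ≠ 0 := by
    apply mul_ne_zero (by simpa using hx) h6
  have p3 : HasDerivAt (fun x : ℝ => 1-x^2) (-(2*x)) x := by
    have := (hasDerivAt_const x (1:ℝ)).sub (hasDerivAt_pow 2 x)
    refine this.congr_deriv ?_; ring
  have p4 : HasDerivAt (fun x : ℝ => 4*x*(3-2*x^2)) (12-24*x^2) x := by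
    have : HasDerivAt (fun x : ℝ => 12*x-8*x^3) (12-24*x^2) x := by
      have := ((hasDerivAt_id x).const_mul 12).sub ((hasDerivAt_pow 3 x).const_mul 8)
      refine this.congr_deriv ?_; ring
    convert this using 2 with y
    ring
  have := ((p3.div p4 h7).mul (hasDerivAt_Lg (by linarith) h2))
  refine this.congr_deriv ?_
  unfold gf
  simp only [Pi.div_apply]
  set L := Lg x
  field_simp
  ring

/-- The function `x ↦ ((1-x²)/(4x(3-2x²))) log((1+x)/(1-x))` is strictly decreasing on
`(0,1)`; equivalently `(2x⁴-3x²+3) x log((1+x)/(1-x)) ≥ 2x²(3-2x²)` for `0 < x < 1`. -/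
theorem stmt12 :
    StrictAntiOn (fun x : ℝ =>
        (1 - x ^ 2) / (4 * x * (3 - 2 * x ^ 2)) * Real.log ((1 + x) / (1 - x)))
      (Set.Ioo (0 : ℝ) 1) ∧
    ∀ x : ℝ, 0 < x → x < 1 →
      2 * x ^ 2 * (3 - 2 * x ^ 2) ≤
        (2 * x ^ 4 - 3 * x ^ 2 + 3) * x * Real.log ((1 + x) / (1 - x)) := by
  have hlog : ∀ x : ℝ, 0 < x → x < 1 → Real.log ((1+x)/(1-x)) = Lg x := by
    intro x h0 h1
    rw [Lg, Real.log_div (by linarith) (by linarith)]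
  constructor
  · have FA : StrictAntiOn Ff (Set.Ioo 0 1) := by
      apply strictAntiOn_of_deriv_neg (convex_Ioo 0 1)
      · intro y hy
        exact (hasDerivAt_Ff hy.1 hy.2).continuousAt.continuousWithinAt
      · intro y hy
        rw [interior_Ioo] at hy
        obtain ⟨hy1, hy2⟩ := hy
        rw [(hasDerivAt_Ff hy1 hy2).deriv]
        apply div_neg_of_neg_of_pos
        · simpa using gf_pos hy1 hy2
        · have : (0:ℝ) < 3-2*y^2 := by nlinarith
          positivity
    intro a ha b hb hab
    have := FA ha hb hab
    simpa only [Ff, hlog a ha.1 ha.2, hlog b hb.1 hb.2] using this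
  · intro x h0 h1
    rw [hlog x h0 h1]
    have hg := gf_pos h0 h1
    unfold gf at hg
    nlinarith [mul_pos h0 hg, Lg_pos h0 h1]
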